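/- Let f : [0,∞) → [0,∞) satisfy f(μ+1)f(μ+β) − f(μ)f(μ+1+β) ≤ 0 for all μ, β ≥ 0. Then for every positive integer α and all μ, β ≥ 0, f(μ+α)f(μ+β) − f(μ)f(μ+α+β) ≤ 0. -/
import Mathlib


theorem stmt_3 (f : ℝ → ℝ) (hf : ∀ x, 0 ≤ x → 0 ≤ f x)
    (h : ∀ μ β : ℝ, 0 ≤ μ → 0 ≤ β →
      f (μ + 1) * f (μ + β) - f μ * f (μ + 1 + β) ≤ 0) :
    ∀ (α : ℕ), 1 ≤ α → ∀ μ β : ℝ, 0 ≤ μ → 0 ≤ β →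
      f (μ + α) * f (μ + β) - f μ * f (μ + α + β) ≤ 0 := by
  have hzero : ∀ x : ℝ, 0 ≤ x → f x = 0 → f (x + 1) = 0 := by
    intro x hx hfx
    have h1 := h x 1 hx zero_le_one
    have h2 : f x * f (x + 1 + 1) = 0 := mul_eq_zero_of_left hfx _
    have h3 : f (x + 1) * f (x + 1) ≤ 0 := by linarith
    have h4 := mul_self_nonneg (f (x + 1))
    exact mul_self_eq_zero.mp (le_antisymm h3 h4)
  intro α
  induction α with
  | zero => intro h0; omega
  | succ n ih =>
    intro _ μ β hμ hβ
    by_cases hn : 1 ≤ n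
    · have IH := ih hn μ β hμ hβ
      have hstep := h (μ + n) β (by positivity) hβ
      have hA : 0 ≤ f (μ + n + β) := hf _ (by positivity)
      have hB : 0 ≤ f (μ + β) := hf _ (by positivity)
      have hC : 0 ≤ f (μ + n + 1 + β) := hf _ (by positivity)
      have hD : 0 ≤ f (μ + n) := hf _ (by positivity)
      have hE : 0 ≤ f μ := hf _ hμ
      have e1 : μ + ((n : ℝ) + 1) = μ + n + 1 := by ring
      push_cast
      rw [e1]
      rcases lt_or_eq_of_le hA with hApos | hAeq
      · have key : (f (μ + n + 1) * f (μ + β) - f μ * f (μ + n + 1 + β)) * f (μ + n + β) ≤ 0 := by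
          nlinarith [mul_le_mul_of_nonneg_right hstep hB, mul_le_mul_of_nonneg_right IH hC]
        nlinarith [key]
      · have hprod : f (μ + n) * f (μ + β) = 0 := by
          have h2 : f μ * f (μ + n + β) = 0 := mul_eq_zero_of_right _ hAeq.symm
          have h3 := mul_nonneg hD hB
          linarith
        rcases mul_eq_zero.mp hprod with h0 | h0
        · have hz : f (μ + n + 1) = 0 := hzero _ (by positivity) h0
          rw [hz, zero_mul]
          nlinarith [mul_nonneg hE hC]
        · rw [h0, mul_zero]
          nlinarith [mul_nonneg hE hC]
    · have hn0 : n = 0 := by omega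
      subst hn0
      have := h μ β hμ hβ
      push_cast
      simpa using this
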